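/- Let A ∈ ℝ^{n×n} be exponentially stable, let C ∈ ℝ^{p×n}, let B_i, B_j ∈ ℝ^n, let D_i, D_j ∈ ℝ^p, and let t_i, t_j ∈ ℕ with t_j > t_i; set τ = t_j − t_i. Let y_i, y_j : ℕ → ℝ^p be the state-space impulse-response signals with data (A, B_i, C, D_i) and activation time t_i, and (A, B_j, C, D_j) and activation time t_j, respectively. Then ∑_{t=0}^∞ y_i(t) · y_j(t) = B_iᵀ (A^{τ−1})ᵀ Cᵀ D_j + B_iᵀ (A^{τ})ᵀ P₀ B_j, where P₀ = ∑_{t=0}^∞ (A^t)ᵀ Cᵀ C A^t is the observability Gramian and · denotes the Euclidean inner product in ℝ^p. -/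

import Mathlib

open Matrix

attribute [local instance] Matrix.normedAddCommGroup

/-- `A` is exponentially stable: `‖A^t‖ ≤ c·r^t` for some `c ≥ 0` and `r ∈ [0,1)`. -/
def ExpStable {n : ℕ} (A : Matrix (Fin n) (Fin n) ℝ) : Prop :=
  ∃ (c r : ℝ), 0 ≤ c ∧ 0 ≤ r ∧ r < 1 ∧ ∀ t : ℕ, ‖A ^ t‖ ≤ c * r ^ t

/-- State-space impulse-response signal with data `(A, B, C, D)` and activation time `t₀`:
`y t = 0` for `t < t₀`, `y t₀ = D`, and `y t = C A^(t-t₀-1) B` for `t > t₀`. -/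
noncomputable def ssImpulse {n p : ℕ} (A : Matrix (Fin n) (Fin n) ℝ) (B : Fin n → ℝ)
    (C : Matrix (Fin p) (Fin n) ℝ) (D : Fin p → ℝ) (t₀ : ℕ) :
    ℕ → EuclideanSpace ℝ (Fin p) :=
  fun t => if t < t₀ then 0 else if t = t₀ then WithLp.toLp 2 D else WithLp.toLp 2 (C *ᵥ ((A ^ (t - t₀ - 1)) *ᵥ B))


noncomputable def toE {p : ℕ} (x : Fin p → ℝ) : EuclideanSpace ℝ (Fin p) := WithLp.toLp 2 x

lemma matNorm_mul_le {a b c : ℕ} (M : Matrix (Fin a) (Fin b) ℝ) (N : Matrix (Fin b) (Fin c) ℝ) :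
    ‖M * N‖ ≤ b * ‖M‖ * ‖N‖ := by
  have hb : (0:ℝ) ≤ b * ‖M‖ * ‖N‖ := by positivity
  refine (Matrix.norm_le_iff hb).2 fun i j => ?_
  rw [Matrix.mul_apply]
  calc ‖∑ k, M i k * N k j‖ ≤ ∑ k, ‖M i k * N k j‖ := norm_sum_le _ _
    _ ≤ ∑ _k : Fin b, ‖M‖ * ‖N‖ := by
        refine Finset.sum_le_sum fun k _ => ?_
        rw [norm_mul]
        exact mul_le_mul (Matrix.norm_entry_le_entrywise_sup_norm M)
          (Matrix.norm_entry_le_entrywise_sup_norm N) (norm_nonneg _) (norm_nonneg _)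
    _ = b * ‖M‖ * ‖N‖ := by simp [Finset.sum_const, mul_assoc]

lemma inner_CAB_CAB {n p : ℕ} (C : Matrix (Fin p) (Fin n) ℝ) (M N : Matrix (Fin n) (Fin n) ℝ)
    (u v : Fin n → ℝ) :
    (inner ℝ (toE (C *ᵥ (M *ᵥ u))) (toE (C *ᵥ (N *ᵥ v))) : ℝ)
      = u ⬝ᵥ ((Mᵀ * Cᵀ * C * N) *ᵥ v) := by
  simp only [PiLp.inner_apply, RCLike.inner_apply', conj_trivial]
  change (C *ᵥ (M *ᵥ u)) ⬝ᵥ (C *ᵥ (N *ᵥ v)) = _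
  rw [dotProduct_mulVec, ← vecMul_transpose, vecMul_vecMul, ← vecMul_transpose, vecMul_vecMul,
    ← dotProduct_mulVec, mulVec_mulVec]
  rw [Matrix.mul_assoc Mᵀ Cᵀ C]

lemma inner_CAB_D {n p : ℕ} (C : Matrix (Fin p) (Fin n) ℝ) (M : Matrix (Fin n) (Fin n) ℝ)
    (u : Fin n → ℝ) (D : Fin p → ℝ) :
    (inner ℝ (toE (C *ᵥ (M *ᵥ u))) (toE D) : ℝ) = u ⬝ᵥ ((Mᵀ * Cᵀ) *ᵥ D) := by
  simp only [PiLp.inner_apply, RCLike.inner_apply', conj_trivial]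
  change (C *ᵥ (M *ᵥ u)) ⬝ᵥ D = _
  rw [← vecMul_transpose, ← vecMul_transpose, vecMul_vecMul, ← dotProduct_mulVec]

theorem cross_term_distinct_activation_times (n p : ℕ)
    (A : Matrix (Fin n) (Fin n) ℝ) (hA : ExpStable A)
    (C : Matrix (Fin p) (Fin n) ℝ)
    (Bi Bj : Fin n → ℝ) (Di Dj : Fin p → ℝ)
    (ti tj : ℕ) (htij : ti < tj) (τ : ℕ) (hτ : τ = tj - ti)
    (P₀ : Matrix (Fin n) (Fin n) ℝ)
    (hP₀ : P₀ = ∑' t : ℕ, (A ^ t)ᵀ * Cᵀ * C * A ^ t) :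
    (∑' t : ℕ, (inner ℝ (ssImpulse A Bi C Di ti t) (ssImpulse A Bj C Dj tj t) : ℝ)) =
      Bi ⬝ᵥ (((A ^ (τ - 1))ᵀ * Cᵀ) *ᵥ Dj) + Bi ⬝ᵥ (((A ^ τ)ᵀ * P₀) *ᵥ Bj) := by
  obtain ⟨c, r, hc, hr0, hr1, hb⟩ := hA
  set M : ℕ → Matrix (Fin n) (Fin n) ℝ := fun t => (A ^ t)ᵀ * Cᵀ * C * A ^ t with hM
  -- norm bound
  have hMb : ∀ t, ‖M t‖ ≤ ((n:ℝ)^2 * p * ‖C‖^2 * c^2) * (r*r)^t := by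
    intro t
    have h1 : ‖(A ^ t)ᵀ * Cᵀ‖ ≤ n * ‖A ^ t‖ * ‖C‖ := by
      have h := matNorm_mul_le (A ^ t)ᵀ Cᵀ
      rwa [Matrix.norm_transpose, Matrix.norm_transpose] at h
    have h2 : ‖(A ^ t)ᵀ * Cᵀ * C‖ ≤ p * ‖(A ^ t)ᵀ * Cᵀ‖ * ‖C‖ := matNorm_mul_le _ _
    have h3 : ‖M t‖ ≤ n * ‖(A ^ t)ᵀ * Cᵀ * C‖ * ‖A ^ t‖ := matNorm_mul_le _ _
    have hat := hb t
    have hat0 : (0:ℝ) ≤ ‖A ^ t‖ := norm_nonneg _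
    have hC0 : (0:ℝ) ≤ ‖C‖ := norm_nonneg _
    have hn0 : (0:ℝ) ≤ (n:ℝ) := Nat.cast_nonneg n
    have hp0 : (0:ℝ) ≤ (p:ℝ) := Nat.cast_nonneg p
    have hsq : ‖A ^ t‖ * ‖A ^ t‖ ≤ (c * r ^ t) * (c * r ^ t) :=
      mul_le_mul hat hat hat0 (by positivity)
    calc ‖M t‖ ≤ n * ‖(A ^ t)ᵀ * Cᵀ * C‖ * ‖A ^ t‖ := h3
      _ ≤ n * (p * (n * ‖A ^ t‖ * ‖C‖) * ‖C‖) * ‖A ^ t‖ := by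
          apply mul_le_mul_of_nonneg_right _ hat0
          apply mul_le_mul_of_nonneg_left _ hn0
          calc ‖(A ^ t)ᵀ * Cᵀ * C‖ ≤ p * ‖(A ^ t)ᵀ * Cᵀ‖ * ‖C‖ := h2
            _ ≤ p * (n * ‖A ^ t‖ * ‖C‖) * ‖C‖ := by
                apply mul_le_mul_of_nonneg_right _ hC0
                exact mul_le_mul_of_nonneg_left h1 hp0
      _ = ((n:ℝ)^2 * p * ‖C‖^2) * (‖A ^ t‖ * ‖A ^ t‖) := by ring
      _ ≤ ((n:ℝ)^2 * p * ‖C‖^2) * ((c * r ^ t) * (c * r ^ t)) := by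
          apply mul_le_mul_of_nonneg_left hsq (by positivity)
      _ = ((n:ℝ)^2 * p * ‖C‖^2 * c^2) * (r*r)^t := by ring
  have hrr1 : r * r < 1 := by nlinarith
  have hsumM : Summable M := by
    refine @Summable.of_norm_bounded _ _ _ ?_ _ _ (Summable.mul_left _ (summable_geometric_of_lt_one (by positivity) hrr1)) hMb
    exact inferInstanceAs (CompleteSpace (Fin n → Fin n → ℝ))
  -- the continuous linear functional
  set L₀ : Matrix (Fin n) (Fin n) ℝ →ₗ[ℝ] ℝ :=
    { toFun := fun X => Bi ⬝ᵥ (((A ^ τ)ᵀ * X) *ᵥ Bj)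
      map_add' := by
        intro X Y
        simp [Matrix.mul_add, Matrix.add_mulVec, dotProduct_add]
      map_smul' := by
        intro a X
        simp [Matrix.mul_smul, Matrix.smul_mulVec, dotProduct_smul] } with hL₀
  set L : Matrix (Fin n) (Fin n) ℝ →L[ℝ] ℝ := LinearMap.toContinuousLinearMap L₀ with hL
  set g : ℕ → ℝ := fun t => inner ℝ (ssImpulse A Bi C Di ti t) (ssImpulse A Bj C Dj tj t) with hg
  have hτ1 : 1 ≤ τ := by omega
  have hg0 : ∀ t, t < tj → g t = 0 := by
    intro t ht
    have : ssImpulse A Bj C Dj tj t = 0 := by simp [ssImpulse, ht]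
    simp [hg, this]
  have hgtail : ∀ s : ℕ, g (s + (tj + 1)) = L (M s) := by
    intro s
    have h1 : ¬ (s + (tj + 1) < ti) := by omega
    have h2 : s + (tj + 1) ≠ ti := by omega
    have h3 : ¬ (s + (tj + 1) < tj) := by omega
    have h4 : s + (tj + 1) ≠ tj := by omega
    have e1 : s + (tj + 1) - ti - 1 = s + τ := by omega
    have e2 : s + (tj + 1) - tj - 1 = s := by omega
    have hy1 : ssImpulse A Bi C Di ti (s + (tj + 1))
        = toE (C *ᵥ ((A ^ (s + τ)) *ᵥ Bi)) := by
      simp [ssImpulse, h1, h2, e1, toE]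
    have hy2 : ssImpulse A Bj C Dj tj (s + (tj + 1))
        = toE (C *ᵥ ((A ^ s) *ᵥ Bj)) := by
      simp [ssImpulse, h3, h4, e2, toE]
    have hmat : (A ^ (s + τ))ᵀ * Cᵀ * C * A ^ s = (A ^ τ)ᵀ * ((A ^ s)ᵀ * Cᵀ * C * A ^ s) := by
      rw [pow_add, transpose_mul]
      simp [Matrix.mul_assoc]
    simp only [hg, hy1, hy2]
    rw [inner_CAB_CAB, hmat]
    rfl
  have hgtj : g tj = Bi ⬝ᵥ (((A ^ (τ - 1))ᵀ * Cᵀ) *ᵥ Dj) := by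
    have h1 : ¬ (tj < ti) := by omega
    have h2 : tj ≠ ti := by omega
    have e1 : tj - ti - 1 = τ - 1 := by omega
    have hy1 : ssImpulse A Bi C Di ti tj = toE (C *ᵥ ((A ^ (τ - 1)) *ᵥ Bi)) := by
      simp [ssImpulse, h1, h2, e1, toE]
    have hy2 : ssImpulse A Bj C Dj tj tj = toE Dj := by
      simp [ssImpulse, toE]
    simp only [hg, hy1, hy2]
    rw [inner_CAB_D]
  have hLsum : Summable (fun s => L (M s)) := hsumM.mapL L
  have hgshift : (fun s => g (s + (tj + 1))) = fun s => L (M s) := funext hgtail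
  have hgsum : Summable g := by
    rw [← summable_nat_add_iff (tj + 1), hgshift]
    exact hLsum
  have key := (Summable.sum_add_tsum_nat_add (f := g) (tj + 1) hgsum).symm
  have hfin : ∑ i ∈ Finset.range (tj + 1), g i = Bi ⬝ᵥ (((A ^ (τ - 1))ᵀ * Cᵀ) *ᵥ Dj) := by
    rw [Finset.sum_eq_single tj]
    · exact hgtj
    · intro b hb hbne
      exact hg0 b (by simp at hb; omega)
    · intro h
      exact absurd (Finset.self_mem_range_succ tj) h
  have htail : ∑' s, g (s + (tj + 1)) = Bi ⬝ᵥ (((A ^ τ)ᵀ * P₀) *ᵥ Bj) := by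
    rw [hgshift, ← L.map_tsum hsumM, hP₀]
    rfl
  calc (∑' t : ℕ, g t)
      = (∑ i ∈ Finset.range (tj + 1), g i) + ∑' s, g (s + (tj + 1)) := key
    _ = Bi ⬝ᵥ (((A ^ (τ - 1))ᵀ * Cᵀ) *ᵥ Dj) + Bi ⬝ᵥ (((A ^ τ)ᵀ * P₀) *ᵥ Bj) := by
        rw [hfin, htail]
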